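/- In the automorphism group Aut(ℚ, <) of the rational numbers as an ordered set, the set of those order automorphisms f of ℚ that have only finitely many finite orbits (i.e., {a ∈ ℚ : the orbit of a under f is finite} is finite) and infinitely many infinite orbits (i.e., the set of infinite orbits of f is infinite) is co-Haar null. -/

import Mathlib

open MeasureTheory
open scoped ENNReal

/-- The topology of pointwise convergence on `Aut(ℚ, <) = (ℚ ≃o ℚ)`: the topology induced by
the embedding `f ↦ (f, f⁻¹)` into `(ℚ → ℚ) × (ℚ → ℚ)`, where `ℚ` carries the *discrete*
topology (`⊥`). -/
instance instQAutTop : TopologicalSpace (ℚ ≃o ℚ) :=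
  TopologicalSpace.induced
    (fun f : ℚ ≃o ℚ => ((⇑f, ⇑(f⁻¹ : ℚ ≃o ℚ)) : (ℚ → ℚ) × (ℚ → ℚ)))
    (@instTopologicalSpaceProd _ _
      (@Pi.topologicalSpace ℚ (fun _ => ℚ) (fun _ => ⊥))
      (@Pi.topologicalSpace ℚ (fun _ => ℚ) (fun _ => ⊥)))

noncomputable instance instQAutMeas : MeasurableSpace (ℚ ≃o ℚ) := borel _

instance instQAutBorel : BorelSpace (ℚ ≃o ℚ) := ⟨rfl⟩

/-- A set `A` in a topological group is *Haar null* if there are a Borel set `B ⊇ A` and a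
Borel probability measure `μ` such that `μ (g • B • h) = 0` for all `g, h`. -/
def HaarNull {G : Type*} [Group G] [MeasurableSpace G] (A : Set G) : Prop :=
  ∃ B : Set G, A ⊆ B ∧ MeasurableSet B ∧
    ∃ μ : Measure G, IsProbabilityMeasure μ ∧
      ∀ g h : G, μ ((fun b => g * b * h) '' B) = 0

/-- The orbit `{fᵏ(a) : k ∈ ℤ}` of `a ∈ ℚ` under an order automorphism `f` of `ℚ`. -/
def orbitQ (f : ℚ ≃o ℚ) (a : ℚ) : Set ℚ :=
  {b | ∃ k : ℤ, (f ^ k) a = b}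

namespace Aux11

/-! ### Order-theoretic facts about orbits -/

lemma pow_apply_succ (f : ℚ ≃o ℚ) (n : ℕ) (a : ℚ) : (f ^ (n + 1)) a = (f ^ n) (f a) := by
  rw [pow_succ]; rfl

lemma strictMono_orbit {f : ℚ ≃o ℚ} {a : ℚ} (h : a < f a) :
    StrictMono (fun n : ℕ => (f ^ n) a) := by
  apply strictMono_nat_of_lt_succ
  intro n
  simp only [pow_apply_succ]
  exact (f ^ n).strictMono h

lemma strictAnti_orbit {f : ℚ ≃o ℚ} {a : ℚ} (h : f a < a) :
    StrictAnti (fun n : ℕ => (f ^ n) a) := by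
  apply strictAnti_nat_of_succ_lt
  intro n
  simp only [pow_apply_succ]
  exact (f ^ n).strictMono h

lemma orbit_infinite {f : ℚ ≃o ℚ} {a : ℚ} (h : f a ≠ a) : (orbitQ f a).Infinite := by
  have key : Function.Injective (fun n : ℕ => (f ^ n) a) := by
    rcases lt_or_gt_of_ne h with h' | h'
    · exact (strictAnti_orbit h').injective
    · exact (strictMono_orbit h').injective
  apply Set.infinite_of_injective_forall_mem key
  intro n
  exact ⟨(n : ℤ), by rw [zpow_natCast]⟩

lemma orbit_eq_singleton {f : ℚ ≃o ℚ} {a : ℚ} (h : f a = a) : orbitQ f a = {a} := by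
  have hinv : f⁻¹ a = a := by
    conv_lhs => rw [← h]
    exact RelIso.inv_apply_self f a
  have hk : ∀ k : ℤ, (f ^ k) a = a := by
    intro k
    induction k using Int.induction_on with
    | zero => simp
    | succ n ih =>
        have h1 : (f ^ ((n : ℤ) + 1)) a = (f ^ (n : ℤ)) (f a) := by
          rw [zpow_add_one]; exact RelIso.mul_apply _ _ _
        rw [h1, h, ih]
    | pred n ih =>
        have h1 : (f ^ (-(n : ℤ) - 1)) a = (f ^ (-(n : ℤ))) (f⁻¹ a) := by
          rw [zpow_sub_one]; exact RelIso.mul_apply _ _ _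
        rw [h1, hinv, ih]
  ext b
  simp only [orbitQ, Set.mem_setOf_eq, Set.mem_singleton_iff]
  constructor
  · rintro ⟨k, rfl⟩; exact hk k
  · rintro rfl; exact ⟨0, by simp⟩

lemma orbit_finite_iff (f : ℚ ≃o ℚ) (a : ℚ) : (orbitQ f a).Finite ↔ f a = a := by
  constructor
  · intro hfin
    by_contra h
    exact (orbit_infinite h) hfin
  · intro h
    rw [orbit_eq_singleton h]
    exact Set.finite_singleton a

lemma mem_interval_lt_self {f : ℚ ≃o ℚ} {a x : ℚ} (hx : x ∈ Set.Ioo a (f a)) : x < f x := by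
  have h1 : f.symm x < a := by
    have := f.symm.strictMono hx.2
    rwa [OrderIso.symm_apply_apply] at this
  have h2 : f.symm x < x := h1.trans hx.1
  have := f.strictMono h2
  rwa [OrderIso.apply_symm_apply] at this

lemma pow_ge_one_gt {f : ℚ ≃o ℚ} {a x : ℚ} (hx : x ∈ Set.Ioo a (f a)) {n : ℕ} (hn : 1 ≤ n) :
    f a < (f ^ n) x := by
  have hmono := strictMono_orbit (mem_interval_lt_self hx)
  have h1 : (f ^ 1) x ≤ (f ^ n) x := hmono.monotone hn
  have h2 : f a < f x := f.strictMono hx.1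
  have : (f ^ 1) x = f x := by simp [pow_one]
  rw [this] at h1
  exact h2.trans_le h1

lemma infinite_orbits_of_lt {f : ℚ ≃o ℚ} {a : ℚ} (h : a < f a) :
    {O : Set ℚ | (∃ b : ℚ, O = orbitQ f b) ∧ O.Infinite}.Infinite := by
  have hIoo : (Set.Ioo a (f a)).Infinite := by
    have := Set.Ioo.infinite h
    exact Set.infinite_coe_iff.mp this
  apply Set.infinite_of_injOn_mapsTo (f := fun x => orbitQ f x) _ _ hIoo
  · -- InjOn
    intro x hx y hy hxy
    simp only at hxy
    by_contra hne
    have hyx : y ∈ orbitQ f x := by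
      rw [hxy]; exact ⟨0, by simp⟩
    obtain ⟨k, hk⟩ := hyx
    have hk0 : k ≠ 0 := by
      rintro rfl; simp at hk; exact hne hk
    rcases lt_or_gt_of_ne hk0 with hneg | hpos
    · -- k < 0 : x = (f ^ (-k)) y
      have hx' : (f ^ (-k)) y = x := by
        rw [← hk, ← RelIso.mul_apply, ← zpow_add]
        simp
      have hknat : (-k).toNat ≥ 1 := by omega
      have hYX : (f ^ ((-k).toNat)) y = x := by
        rw [← zpow_natCast, Int.toNat_of_nonneg (by omega)]; exact hx'
      have hgt := pow_ge_one_gt hy hknat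
      rw [hYX] at hgt
      exact absurd hx.2 (not_lt.mpr hgt.le)
    · have hknat : k.toNat ≥ 1 := by omega
      have hXY : (f ^ (k.toNat)) x = y := by
        rw [← zpow_natCast, Int.toNat_of_nonneg (by omega)]; exact hk
      have hgt := pow_ge_one_gt hx hknat
      rw [hXY] at hgt
      exact absurd hy.2 (not_lt.mpr hgt.le)
  · -- MapsTo
    intro x hx
    refine ⟨⟨x, rfl⟩, ?_⟩
    exact orbit_infinite (ne_of_gt (mem_interval_lt_self hx))

lemma orbit_inv (f : ℚ ≃o ℚ) (b : ℚ) : orbitQ f⁻¹ b = orbitQ f b := by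
  ext z
  constructor
  · rintro ⟨k, rfl⟩
    refine ⟨-k, ?_⟩
    rw [zpow_neg, ← inv_zpow]
  · rintro ⟨k, rfl⟩
    refine ⟨-k, ?_⟩
    rw [inv_zpow, ← zpow_neg, neg_neg]

lemma infinite_orbits_of_fix_finite {f : ℚ ≃o ℚ} (h : {a : ℚ | f a = a}.Finite) :
    {O : Set ℚ | (∃ b : ℚ, O = orbitQ f b) ∧ O.Infinite}.Infinite := by
  obtain ⟨a, ha⟩ := h.infinite_compl.nonempty
  have ha' : f a ≠ a := ha
  rcases lt_or_gt_of_ne ha' with hlt | hgt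
  · -- f a < a ; use f⁻¹
    have h2 : a < f⁻¹ a := by
      have := f.symm.strictMono hlt
      rwa [OrderIso.symm_apply_apply] at this
    have := infinite_orbits_of_lt (f := f⁻¹) h2
    have hset : {O : Set ℚ | (∃ b : ℚ, O = orbitQ f⁻¹ b) ∧ O.Infinite}
        = {O : Set ℚ | (∃ b : ℚ, O = orbitQ f b) ∧ O.Infinite} := by
      ext O
      simp only [Set.mem_setOf_eq, orbit_inv]
    rwa [hset] at this
  · exact infinite_orbits_of_lt hgt

lemma good_of_fix_finite {f : ℚ ≃o ℚ} (h : {a : ℚ | f a = a}.Finite) :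
    {a : ℚ | (orbitQ f a).Finite}.Finite ∧
      {O : Set ℚ | (∃ a : ℚ, O = orbitQ f a) ∧ O.Infinite}.Infinite := by
  constructor
  · have : {a : ℚ | (orbitQ f a).Finite} = {a : ℚ | f a = a} := by
      ext a; simp [orbit_finite_iff]
    rwa [this]
  · exact infinite_orbits_of_fix_finite h

/-! ### Binary encodings -/

def ofBits : (ℕ → Bool) → ℕ → ℕ
  | _, 0 => 0
  | f, m + 1 => (f 0).toNat + 2 * ofBits (fun i => f (i + 1)) m

lemma ofBits_lt (f : ℕ → Bool) (m : ℕ) : ofBits f m < 2 ^ m := by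
  induction m generalizing f with
  | zero => simp [ofBits]
  | succ m ih =>
      have := ih (fun i => f (i + 1))
      have hb : (f 0).toNat ≤ 1 := Bool.toNat_le _
      simp only [ofBits, pow_succ]
      omega

lemma testBit_ofBits (f : ℕ → Bool) (m i : ℕ) :
    (ofBits f m).testBit i = (f i && decide (i < m)) := by
  induction m generalizing f i with
  | zero => simp [ofBits]
  | succ m ih =>
      cases i with
      | zero =>
          simp only [ofBits, Nat.testBit_zero]
          cases h : f 0 <;> simp [h]
      | succ i =>
          have hdiv : ((f 0).toNat + 2 * ofBits (fun i => f (i + 1)) m) / 2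
              = ofBits (fun i => f (i + 1)) m := by
            have hb : (f 0).toNat ≤ 1 := Bool.toNat_le _
            omega
          simp only [ofBits, Nat.testBit_add_one, hdiv, ih]
          simp [Nat.succ_lt_succ_iff]

lemma ofBits_congr {f g : ℕ → Bool} {m : ℕ} (h : ∀ i < m, f i = g i) :
    ofBits f m = ofBits g m := by
  apply Nat.eq_of_testBit_eq
  intro i
  rw [testBit_ofBits, testBit_ofBits]
  by_cases hi : i < m
  · rw [h i hi]
  · simp [hi]

lemma ofBits_xor (f g : ℕ → Bool) (m : ℕ) :
    ofBits (fun i => xor (f i) (g i)) m = ofBits f m ^^^ ofBits g m := by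
  apply Nat.eq_of_testBit_eq
  intro i
  rw [Nat.testBit_xor, testBit_ofBits, testBit_ofBits, testBit_ofBits]
  cases f i <;> cases g i <;> cases decide (i < m) <;> rfl

lemma ofBits_testBit {t m : ℕ} (h : t < 2 ^ m) : ofBits t.testBit m = t := by
  apply Nat.eq_of_testBit_eq
  intro i
  rw [testBit_ofBits]
  by_cases hi : i < m
  · simp [hi]
  · have : t < 2 ^ i := h.trans_le (Nat.pow_le_pow_right (by norm_num) (by omega))
    simp [hi, Nat.testBit_lt_two_pow this]

lemma xor_eq_iff {a b t : ℕ} : a ^^^ t = b ↔ a = b ^^^ t := by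
  constructor
  · rintro rfl; rw [Nat.xor_assoc, Nat.xor_self, Nat.xor_zero]
  · rintro rfl; rw [Nat.xor_assoc, Nat.xor_self, Nat.xor_zero]

/-! ### The random back-and-forth construction -/

abbrev KSp : Type := ℕ → ZMod 2

noncomputable def muK : Measure KSp :=
  MeasureTheory.Measure.addHaarMeasure (⊤ : TopologicalSpace.PositiveCompacts KSp)

instance : IsProbabilityMeasure muK :=
  ⟨by rw [← TopologicalSpace.PositiveCompacts.coe_top (α := KSp)]
      exact MeasureTheory.Measure.addHaarMeasure_self⟩

instance : muK.IsAddLeftInvariant := by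
  unfold muK; infer_instance

/-- An enumeration of `ℚ`. -/
def eQ : ℕ ≃ ℚ := (Denumerable.eqv ℚ).symm

/-- position of the `i`-th random bit used at stage `m`. -/
def bpos (m i : ℕ) : ℕ := Nat.pairEquiv (m, i)

/-- The random index (`< 2 ^ m`) used at stage `m`. -/
def jj (m : ℕ) (ω : KSp) : ℕ := ofBits (fun i => decide (ω (bpos m i) = 1)) m

lemma jj_lt (m : ℕ) (ω : KSp) : jj m ω < 2 ^ m := ofBits_lt _ _

/-- Order-compatibility of a finite partial map. -/
def OK (s : Finset (ℚ × ℚ)) : Prop :=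
  ∀ p ∈ s, ∀ p' ∈ s, (p.1 < p'.1 ↔ p.2 < p'.2)

lemma OK_fun {s : Finset (ℚ × ℚ)} (hs : OK s) {q r r' : ℚ}
    (h1 : (q, r) ∈ s) (h2 : (q, r') ∈ s) : r = r' := by
  have a1 := hs _ h1 _ h2
  have a2 := hs _ h2 _ h1
  simp only at a1 a2
  have h3 : ¬ r < r' := fun hc => lt_irrefl q (a1.mpr hc)
  have h4 : ¬ r' < r := fun hc => lt_irrefl q (a2.mpr hc)
  exact le_antisymm (not_lt.mp h4) (not_lt.mp h3)

/-- The set of allowed images of `q`. -/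
def SF (s : Finset (ℚ × ℚ)) (q : ℚ) : Set ℚ :=
  {r | ∀ p ∈ s, (p.1 < q → p.2 < r) ∧ (q < p.1 → r < p.2)}

/-- The set of allowed preimages of `r`. -/
def SB (s : Finset (ℚ × ℚ)) (r : ℚ) : Set ℚ :=
  {q | ∀ p ∈ s, (p.2 < r → p.1 < q) ∧ (r < p.2 → q < p.1)}

lemma SF_has_Ioo {s : Finset (ℚ × ℚ)} (hs : OK s) (q : ℚ) :
    ∃ a b : ℚ, a < b ∧ Set.Ioo a b ⊆ SF s q := by
  classical
  set L := s.filter (fun p => p.1 < q) with hL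
  set U := s.filter (fun p => q < p.1) with hU
  have memL : ∀ p ∈ s, p.1 < q → p.2 ∈ L.image Prod.snd := by
    intro p hp h
    exact Finset.mem_image_of_mem _ (Finset.mem_filter.mpr ⟨hp, h⟩)
  have memU : ∀ p ∈ s, q < p.1 → p.2 ∈ U.image Prod.snd := by
    intro p hp h
    exact Finset.mem_image_of_mem _ (Finset.mem_filter.mpr ⟨hp, h⟩)
  by_cases hLn : (L.image Prod.snd).Nonempty
  · by_cases hUn : (U.image Prod.snd).Nonempty
    · refine ⟨(L.image Prod.snd).max' hLn, (U.image Prod.snd).min' hUn, ?_, ?_⟩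
      · obtain ⟨x, hxm⟩ := Finset.mem_image.mp ((L.image Prod.snd).max'_mem hLn)
        obtain ⟨y, hym⟩ := Finset.mem_image.mp ((U.image Prod.snd).min'_mem hUn)
        obtain ⟨hx, hx2⟩ := hxm
        obtain ⟨hy, hy2⟩ := hym
        rw [← hx2, ← hy2]
        have hx' := Finset.mem_filter.mp hx
        have hy' := Finset.mem_filter.mp hy
        exact (hs _ hx'.1 _ hy'.1).mp (hx'.2.trans hy'.2)
      · intro r hr p hp
        constructor
        · intro h
          exact (Finset.le_max' _ _ (memL p hp h)).trans_lt hr.1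
        · intro h
          exact hr.2.trans_le (Finset.min'_le _ _ (memU p hp h))
    · refine ⟨(L.image Prod.snd).max' hLn, (L.image Prod.snd).max' hLn + 1, by linarith, ?_⟩
      intro r hr p hp
      constructor
      · intro h
        exact (Finset.le_max' _ _ (memL p hp h)).trans_lt hr.1
      · intro h
        exact absurd ⟨p.2, memU p hp h⟩ hUn
  · by_cases hUn : (U.image Prod.snd).Nonempty
    · refine ⟨(U.image Prod.snd).min' hUn - 1, (U.image Prod.snd).min' hUn, by linarith, ?_⟩
      intro r hr p hp
      constructor
      · intro h
        exact absurd ⟨p.2, memL p hp h⟩ hLn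
      · intro h
        exact hr.2.trans_le (Finset.min'_le _ _ (memU p hp h))
    · refine ⟨0, 1, by norm_num, ?_⟩
      intro r _ p hp
      constructor
      · intro h
        exact absurd ⟨p.2, memL p hp h⟩ hLn
      · intro h
        exact absurd ⟨p.2, memU p hp h⟩ hUn

lemma SB_has_Ioo {s : Finset (ℚ × ℚ)} (hs : OK s) (r : ℚ) :
    ∃ a b : ℚ, a < b ∧ Set.Ioo a b ⊆ SB s r := by
  classical
  have hs' : OK (s.image Prod.swap) := by
    intro p hp p' hp'
    obtain ⟨x, hx, rfl⟩ := Finset.mem_image.mp hp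
    obtain ⟨y, hy, rfl⟩ := Finset.mem_image.mp hp'
    exact (hs _ hx _ hy).symm
  obtain ⟨a, b, hab, hsub⟩ := SF_has_Ioo hs' r
  refine ⟨a, b, hab, ?_⟩
  intro x hx p hp
  have := hsub hx (Prod.swap p) (Finset.mem_image_of_mem _ hp)
  exact this

lemma SF_infinite {s : Finset (ℚ × ℚ)} (hs : OK s) (q : ℚ) : (SF s q).Infinite := by
  obtain ⟨a, b, hab, hsub⟩ := SF_has_Ioo hs q
  exact (Set.Ioo.infinite hab |> Set.infinite_coe_iff.mp).mono hsub

lemma SB_infinite {s : Finset (ℚ × ℚ)} (hs : OK s) (r : ℚ) : (SB s r).Infinite := by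
  obtain ⟨a, b, hab, hsub⟩ := SB_has_Ioo hs r
  exact (Set.Ioo.infinite hab |> Set.infinite_coe_iff.mp).mono hsub

noncomputable def nthQ (S : Set ℚ) (k : ℕ) : ℚ := eQ (Nat.nth (fun i => eQ i ∈ S) k)

lemma preim_infinite {S : Set ℚ} (hS : S.Infinite) : {i : ℕ | eQ i ∈ S}.Infinite := by
  have : S ⊆ Set.range eQ := by
    rw [Equiv.range_eq_univ]; exact Set.subset_univ _
  exact hS.preimage this

lemma nthQ_mem {S : Set ℚ} (hS : S.Infinite) (k : ℕ) : nthQ S k ∈ S :=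
  Nat.nth_mem_of_infinite (preim_infinite hS) k

lemma nthQ_inj {S : Set ℚ} (hS : S.Infinite) : Function.Injective (nthQ S) := by
  intro a b h
  exact Nat.nth_injective (preim_infinite hS) (eQ.injective h)

lemma OK_insertF {s : Finset (ℚ × ℚ)} {q r : ℚ} (hs : OK s)
    (hq : ∀ p ∈ s, p.1 ≠ q) (hr : r ∈ SF s q) : OK (insert (q, r) s) := by
  classical
  intro p hp p' hp'
  rcases Finset.mem_insert.mp hp with rfl | hp <;>
    rcases Finset.mem_insert.mp hp' with rfl | hp'
  · simp
  · simp only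
    constructor
    · intro h
      exact (hr p' hp').2 h
    · intro h
      rcases lt_trichotomy p'.1 q with h1 | h1 | h1
      · exact absurd h (not_lt.mpr ((hr p' hp').1 h1).le)
      · exact absurd h1 (hq p' hp')
      · exact h1
  · simp only
    constructor
    · intro h
      exact (hr p hp).1 h
    · intro h
      rcases lt_trichotomy p.1 q with h1 | h1 | h1
      · exact h1
      · exact absurd h1 (hq p hp)
      · exact absurd h (not_lt.mpr ((hr p hp).2 h1).le)
  · exact hs _ hp _ hp'

lemma OK_insertB {s : Finset (ℚ × ℚ)} {q r : ℚ} (hs : OK s)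
    (hr : ∀ p ∈ s, p.2 ≠ r) (hq : q ∈ SB s r) : OK (insert (q, r) s) := by
  classical
  have hs' : OK (s.image Prod.swap) := by
    intro p hp p' hp'
    obtain ⟨x, hx, rfl⟩ := Finset.mem_image.mp hp
    obtain ⟨y, hy, rfl⟩ := Finset.mem_image.mp hp'
    exact (hs _ hx _ hy).symm
  have hr' : ∀ p ∈ s.image Prod.swap, p.1 ≠ r := by
    intro p hp
    obtain ⟨x, hx, rfl⟩ := Finset.mem_image.mp hp
    exact hr x hx
  have hq' : q ∈ SF (s.image Prod.swap) r := by
    intro p hp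
    obtain ⟨x, hx, rfl⟩ := Finset.mem_image.mp hp
    simpa using hq x hx
  have key := OK_insertF hs' hr' hq'
  intro p hp p' hp'
  have h1 : Prod.swap p ∈ insert (r, q) (s.image Prod.swap) := by
    rcases Finset.mem_insert.mp hp with rfl | hp
    · exact Finset.mem_insert_self _ _
    · exact Finset.mem_insert_of_mem (Finset.mem_image_of_mem _ hp)
  have h1' : Prod.swap p' ∈ insert (r, q) (s.image Prod.swap) := by
    rcases Finset.mem_insert.mp hp' with rfl | hp'
    · exact Finset.mem_insert_self _ _
    · exact Finset.mem_insert_of_mem (Finset.mem_image_of_mem _ hp')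
  exact (key _ h1 _ h1').symm

/-! ### The construction -/

noncomputable def step (m k : ℕ) (s : Finset (ℚ × ℚ)) : Finset (ℚ × ℚ) := by
  classical
  exact if m % 2 = 0 then
    (if ∀ p ∈ s, p.1 ≠ eQ (m / 2)
      then insert (eQ (m / 2), nthQ (SF s (eQ (m / 2))) k) s else s)
  else
    (if ∀ p ∈ s, p.2 ≠ eQ (m / 2)
      then insert (nthQ (SB s (eQ (m / 2))) k, eQ (m / 2)) s else s)

noncomputable def build (ω : KSp) : ℕ → Finset (ℚ × ℚ)
  | 0 => ∅
  | m + 1 => step m (jj m ω) (build ω m)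

lemma subset_step (m k : ℕ) (s : Finset (ℚ × ℚ)) : s ⊆ step m k s := by
  unfold step
  split_ifs <;> first | exact Finset.subset_insert _ _ | exact subset_rfl

lemma build_mono (ω : KSp) {m m' : ℕ} (h : m ≤ m') : build ω m ⊆ build ω m' := by
  induction m' with
  | zero =>
      have : m = 0 := Nat.le_zero.mp h
      subst this; exact subset_rfl
  | succ n ih =>
      rcases Nat.le_succ_iff.mp h with h1 | h1
      · exact (ih h1).trans (subset_step n (jj n ω) (build ω n))
      · subst h1; exact subset_rfl

lemma OK_step {m k : ℕ} {s : Finset (ℚ × ℚ)} (hs : OK s) : OK (step m k s) := by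
  unfold step
  split_ifs with h1 h2 h3
  · exact OK_insertF hs h2 (nthQ_mem (SF_infinite hs _) k)
  · exact hs
  · exact OK_insertB hs h3 (nthQ_mem (SB_infinite hs _) k)
  · exact hs

lemma OK_build (ω : KSp) (m : ℕ) : OK (build ω m) := by
  induction m with
  | zero => intro p hp; simp [build] at hp
  | succ n ih => exact OK_step ih

lemma build_fun {ω : KSp} {m m' : ℕ} {q r r' : ℚ}
    (h1 : (q, r) ∈ build ω m) (h2 : (q, r') ∈ build ω m') : r = r' := by
  have hh1 : (q, r) ∈ build ω (max m m') := build_mono ω (le_max_left _ _) h1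
  have hh2 : (q, r') ∈ build ω (max m m') := build_mono ω (le_max_right _ _) h2
  exact OK_fun (OK_build ω _) hh1 hh2

lemma build_inj {ω : KSp} {m m' : ℕ} {q q' r : ℚ}
    (h1 : (q, r) ∈ build ω m) (h2 : (q', r) ∈ build ω m') : q = q' := by
  have hh1 : (q, r) ∈ build ω (max m m') := build_mono ω (le_max_left _ _) h1
  have hh2 : (q', r) ∈ build ω (max m m') := build_mono ω (le_max_right _ _) h2
  have hOK := OK_build ω (max m m')
  have a1 := hOK _ hh1 _ hh2
  have a2 := hOK _ hh2 _ hh1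
  simp only at a1 a2
  have h3 : ¬ q < q' := fun hc => lt_irrefl r (a1.mp hc)
  have h4 : ¬ q' < q := fun hc => lt_irrefl r (a2.mp hc)
  exact le_antisymm (not_lt.mp h4) (not_lt.mp h3)

lemma build_lt {ω : KSp} {m m' : ℕ} {q q' r r' : ℚ}
    (h1 : (q, r) ∈ build ω m) (h2 : (q', r') ∈ build ω m') (h : q < q') : r < r' := by
  have hh1 : (q, r) ∈ build ω (max m m') := build_mono ω (le_max_left _ _) h1
  have hh2 : (q', r') ∈ build ω (max m m') := build_mono ω (le_max_right _ _) h2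
  exact (OK_build ω (max m m') _ hh1 _ hh2).mp h

lemma mem_dom_build (ω : KSp) (n : ℕ) : ∃ r, (eQ n, r) ∈ build ω (2 * n + 1) := by
  classical
  have hmod : (2 * n) % 2 = 0 := Nat.mul_mod_right 2 n
  have hdiv : (2 * n) / 2 = n := by omega
  show ∃ r, (eQ n, r) ∈ step (2 * n) (jj (2 * n) ω) (build ω (2 * n))
  unfold step
  rw [if_pos hmod, hdiv]
  by_cases hg : ∀ p ∈ build ω (2 * n), p.1 ≠ eQ n
  · rw [if_pos hg]
    exact ⟨_, Finset.mem_insert_self _ _⟩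
  · rw [if_neg hg]
    push_neg at hg
    obtain ⟨p, hp, hpq⟩ := hg
    exact ⟨p.2, by rwa [← hpq, Prod.mk.eta]⟩

lemma mem_ran_build (ω : KSp) (n : ℕ) : ∃ q, (q, eQ n) ∈ build ω (2 * n + 2) := by
  classical
  have hmod : ¬ ((2 * n + 1) % 2 = 0) := by omega
  have hdiv : (2 * n + 1) / 2 = n := by omega
  show ∃ q, (q, eQ n) ∈ step (2 * n + 1) (jj (2 * n + 1) ω) (build ω (2 * n + 1))
  unfold step
  rw [if_neg hmod, hdiv]
  by_cases hg : ∀ p ∈ build ω (2 * n + 1), p.2 ≠ eQ n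
  · rw [if_pos hg]
    exact ⟨_, Finset.mem_insert_self _ _⟩
  · rw [if_neg hg]
    push_neg at hg
    obtain ⟨p, hp, hpq⟩ := hg
    exact ⟨p.1, by rwa [← hpq, Prod.mk.eta]⟩

lemma exFF (ω : KSp) (q : ℚ) : ∃ r, (q, r) ∈ build ω (2 * (eQ.symm q) + 1) := by
  have := mem_dom_build ω (eQ.symm q)
  rwa [Equiv.apply_symm_apply] at this

noncomputable def FF (ω : KSp) (q : ℚ) : ℚ := (exFF ω q).choose

lemma FF_mem (ω : KSp) (q : ℚ) : (q, FF ω q) ∈ build ω (2 * (eQ.symm q) + 1) :=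
  (exFF ω q).choose_spec

lemma FF_eq_iff {ω : KSp} {q r : ℚ} : FF ω q = r ↔ ∃ m, (q, r) ∈ build ω m := by
  constructor
  · rintro rfl
    exact ⟨_, FF_mem ω q⟩
  · rintro ⟨m, hm⟩
    exact build_fun (FF_mem ω q) hm

lemma strictMono_FF (ω : KSp) : StrictMono (FF ω) := by
  intro q q' h
  exact build_lt (FF_mem ω q) (FF_mem ω q') h

lemma surj_FF (ω : KSp) : Function.Surjective (FF ω) := by
  intro r
  obtain ⟨q, hq⟩ := mem_ran_build ω (eQ.symm r)
  rw [Equiv.apply_symm_apply] at hq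
  exact ⟨q, build_fun (FF_mem ω q) hq⟩

noncomputable def Phi (ω : KSp) : ℚ ≃o ℚ :=
  StrictMono.orderIsoOfSurjective (FF ω) (strictMono_FF ω) (surj_FF ω)

lemma coe_Phi (ω : KSp) : ⇑(Phi ω) = FF ω :=
  StrictMono.coe_orderIsoOfSurjective _ _ _

lemma coe_Phi_symm_eq {ω : KSp} {q r : ℚ} : (Phi ω).symm q = r ↔ FF ω r = q := by
  rw [OrderIso.symm_apply_eq, coe_Phi, eq_comm]

/-! ### Locality -/

def TT (m : ℕ) : Finset ℕ := (Finset.range m).biUnion (fun m' => (Finset.range m').image (bpos m'))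

lemma mem_TT {m x : ℕ} : x ∈ TT m ↔ ∃ m' < m, ∃ i < m', x = bpos m' i := by
  simp only [TT, Finset.mem_biUnion, Finset.mem_range, Finset.mem_image]
  constructor
  · rintro ⟨m', h1, i, h2, rfl⟩; exact ⟨m', h1, i, h2, rfl⟩
  · rintro ⟨m', h1, i, h2, rfl⟩; exact ⟨m', h1, i, h2, rfl⟩

lemma jj_local {m : ℕ} {ω ω' : KSp} (h : ∀ i < m, ω (bpos m i) = ω' (bpos m i)) :
    jj m ω = jj m ω' := by
  unfold jj
  exact ofBits_congr (fun i hi => by rw [h i hi])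

lemma build_local {m : ℕ} {ω ω' : KSp} (h : ∀ x ∈ TT m, ω x = ω' x) :
    build ω m = build ω' m := by
  induction m with
  | zero => rfl
  | succ n ih =>
      have h1 : build ω n = build ω' n := by
        apply ih
        intro x hx
        apply h
        rw [mem_TT] at hx ⊢
        obtain ⟨m', hm', hi⟩ := hx
        exact ⟨m', by omega, hi⟩
      have h2 : jj n ω = jj n ω' := by
        apply jj_local
        intro i hi
        apply h
        rw [mem_TT]
        exact ⟨n, by omega, i, hi, rfl⟩
      show step n (jj n ω) (build ω n) = step n (jj n ω') (build ω' n)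
      rw [h1, h2]

lemma isOpen_local {α : Type*} (g : KSp → α) (T : Finset ℕ)
    (hg : ∀ ω ω', (∀ x ∈ T, ω x = ω' x) → g ω = g ω') (a : α) :
    IsOpen {ω : KSp | g ω = a} := by
  rw [isOpen_iff_mem_nhds]
  intro ω₀ h₀
  rw [mem_nhds_iff]
  refine ⟨⋂ x ∈ T, {ω : KSp | ω x = ω₀ x}, ?_, ?_, ?_⟩
  · intro ω hω
    simp only [Set.mem_iInter, Set.mem_setOf_eq] at hω
    show g ω = a
    rw [hg ω ω₀ hω]
    exact h₀
  · apply isOpen_biInter_finset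
    intro x _
    show IsOpen ((fun ω : KSp => ω x) ⁻¹' {ω₀ x})
    exact IsOpen.preimage (continuous_apply x) (isOpen_discrete _)
  · exact Set.mem_iInter₂.mpr fun x _ => rfl

lemma isOpen_build_fiber (m : ℕ) (s₀ : Finset (ℚ × ℚ)) :
    IsOpen {ω : KSp | build ω m = s₀} :=
  isOpen_local (build · m) (TT m) (fun _ _ h => build_local h) s₀

lemma isOpen_build_mem (m : ℕ) (p : ℚ × ℚ) :
    IsOpen {ω : KSp | p ∈ build ω m} := by
  have : {ω : KSp | p ∈ build ω m} = ⋃ (s₀ : Finset (ℚ × ℚ)) (_ : p ∈ s₀), {ω : KSp | build ω m = s₀} := by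
    ext ω
    simp only [Set.mem_setOf_eq, Set.mem_iUnion]
    constructor
    · intro h; exact ⟨build ω m, h, rfl⟩
    · rintro ⟨s₀, h, rfl⟩; exact h
  rw [this]
  exact isOpen_iUnion (fun s₀ => isOpen_iUnion (fun _ => isOpen_build_fiber m s₀))

lemma FF_fiber (q r : ℚ) :
    {ω : KSp | FF ω q = r} = {ω : KSp | (q, r) ∈ build ω (2 * eQ.symm q + 1)} := by
  ext ω
  simp only [Set.mem_setOf_eq]
  constructor
  · rintro rfl
    exact FF_mem ω q
  · intro h
    exact FF_eq_iff.mpr ⟨_, h⟩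

lemma symm_fiber (q r : ℚ) :
    {ω : KSp | (Phi ω).symm q = r} = {ω : KSp | (r, q) ∈ build ω (2 * eQ.symm q + 2)} := by
  ext ω
  simp only [Set.mem_setOf_eq, coe_Phi_symm_eq]
  constructor
  · intro h
    obtain ⟨q₀, hq₀⟩ := mem_ran_build ω (eQ.symm q)
    rw [Equiv.apply_symm_apply] at hq₀
    have h2 : FF ω q₀ = q := build_fun (FF_mem ω q₀) hq₀
    have hrq : r = q₀ := (strictMono_FF ω).injective (by rw [h, h2])
    rw [hrq]
    exact hq₀
  · intro h
    exact FF_eq_iff.mpr ⟨_, h⟩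

lemma continuous_bot {X : Type*} [TopologicalSpace X] (f : X → ℚ)
    (h : ∀ r : ℚ, IsOpen {x | f x = r}) : @Continuous X ℚ _ ⊥ f := by
  rw [continuous_def]
  intro s _
  have hs : f ⁻¹' s = ⋃ (r : ℚ) (_ : r ∈ s), {x | f x = r} := by
    ext x
    simp only [Set.mem_preimage, Set.mem_iUnion, Set.mem_setOf_eq]
    constructor
    · intro hx; exact ⟨f x, hx, rfl⟩
    · rintro ⟨r, hr, rfl⟩; exact hr
  rw [hs]
  exact isOpen_iUnion fun r => isOpen_iUnion fun _ => h r

lemma measurable_Phi : Measurable Phi := by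
  have hcont : Continuous Phi := by
    letI : TopologicalSpace ℚ := ⊥
    apply continuous_induced_rng.mpr
    apply Continuous.prodMk
    · apply continuous_pi
      intro q
      have he : (fun ω : KSp => (Phi ω) q) = fun ω : KSp => FF ω q := by
        funext ω; rw [coe_Phi]
      show Continuous (fun ω : KSp => (Phi ω) q)
      rw [he]
      apply continuous_bot
      intro r
      rw [FF_fiber]
      exact isOpen_build_mem _ _
    · apply continuous_pi
      intro q
      show Continuous (fun ω : KSp => (Phi ω)⁻¹ q)
      have he : (fun ω : KSp => (Phi ω)⁻¹ q) = fun ω : KSp => (Phi ω).symm q := rfl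
      rw [he]
      apply continuous_bot
      intro r
      rw [symm_fiber]
      exact isOpen_build_mem _ _
  exact hcont.measurable

/-! ### The target sets in `Aut(ℚ,<)` -/

def Wset (c : ℚ → ℚ) : Set (ℚ ≃o ℚ) := {f | {y : ℚ | f y = c y}.Infinite}

lemma isOpen_eval_fiber (y r : ℚ) : IsOpen {f : ℚ ≃o ℚ | f y = r} := by
  letI : TopologicalSpace ℚ := ⊥
  haveI : DiscreteTopology ℚ := ⟨rfl⟩
  have hι : Continuous (fun f : ℚ ≃o ℚ =>
      ((⇑f, ⇑(f⁻¹ : ℚ ≃o ℚ)) : (ℚ → ℚ) × (ℚ → ℚ))) := continuous_induced_dom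
  have h2 : Continuous (fun f : ℚ ≃o ℚ => f y) :=
    (continuous_apply y).comp (continuous_fst.comp hι)
  show IsOpen ((fun f : ℚ ≃o ℚ => f y) ⁻¹' {r})
  exact IsOpen.preimage h2 (isOpen_discrete _)

lemma mem_W_iff {c : ℚ → ℚ} {f : ℚ ≃o ℚ} :
    f ∈ Wset c ↔ ∀ F : Finset ℚ, ∃ y ∉ F, f y = c y := by
  constructor
  · intro h F
    obtain ⟨y, hy, hyF⟩ := h.exists_notMem_finset F
    exact ⟨y, hyF, hy⟩
  · intro h
    by_contra hfin
    rw [Wset, Set.mem_setOf_eq, Set.not_infinite] at hfin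
    obtain ⟨y, hyF, hy⟩ := h hfin.toFinset
    exact hyF (hfin.mem_toFinset.mpr hy)

lemma measurableSet_W (c : ℚ → ℚ) : MeasurableSet (Wset c) := by
  have : Wset c = ⋂ F : Finset ℚ, ⋃ (y : ℚ) (_ : y ∉ F), {f : ℚ ≃o ℚ | f y = c y} := by
    ext f
    simp only [Set.mem_iInter, Set.mem_iUnion, Set.mem_setOf_eq]
    rw [mem_W_iff]
    constructor
    · intro h F; obtain ⟨y, h1, h2⟩ := h F; exact ⟨y, h1, h2⟩
    · intro h F; obtain ⟨y, h1, h2⟩ := h F; exact ⟨y, h1, h2⟩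
  rw [this]
  apply MeasurableSet.iInter
  intro F
  apply MeasurableSet.iUnion
  intro y
  apply MeasurableSet.iUnion
  intro _
  exact (isOpen_eval_fiber y (c y)).measurableSet

lemma image_W (g h : ℚ ≃o ℚ) :
    (fun b => g * b * h) '' (Wset fun y => y) = Wset (fun y => g (h y)) := by
  ext f
  constructor
  · rintro ⟨b, hb, rfl⟩
    -- show g * b * h ∈ Wset (g ∘ h)
    have hS : {y : ℚ | b y = y}.Infinite := hb
    show {y : ℚ | (g * b * h) y = g (h y)}.Infinite
    have hT : {y : ℚ | (g * b * h) y = g (h y)} = (⇑h) ⁻¹' {y : ℚ | b y = y} := by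
      ext y
      simp only [Set.mem_setOf_eq, Set.mem_preimage, RelIso.mul_apply]
      constructor
      · intro hy; exact g.injective hy
      · intro hy; rw [hy]
    rw [hT]
    exact hS.preimage (by rw [(EquivLike.surjective h).range_eq]; exact Set.subset_univ _)
  · intro hf
    refine ⟨g⁻¹ * f * h⁻¹, ?_, by group⟩
    have hT : {y : ℚ | (g⁻¹ * f * h⁻¹) y = y} = (⇑(h⁻¹ : ℚ ≃o ℚ)) ⁻¹' {y : ℚ | f y = g (h y)} := by
      ext y
      simp only [Set.mem_setOf_eq, Set.mem_preimage, RelIso.mul_apply]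
      constructor
      · intro hy
        have := congrArg g hy
        rw [RelIso.apply_inv_self] at this
        rw [this]
        congr 1
        exact (RelIso.apply_inv_self h y).symm
      · intro hy
        have : f (h⁻¹ y) = g (h (h⁻¹ y)) := hy
        rw [RelIso.apply_inv_self] at this
        rw [this]
        exact RelIso.inv_apply_self g y
    show {y : ℚ | (g⁻¹ * f * h⁻¹) y = y}.Infinite
    rw [hT]
    exact Set.Infinite.preimage hf
      (by rw [(EquivLike.surjective (h⁻¹ : ℚ ≃o ℚ)).range_eq]; exact Set.subset_univ _)

/-! ### Agreement events and the measure estimate -/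

lemma build_succ (ω : KSp) (m : ℕ) : build ω (m + 1) = step m (jj m ω) (build ω m) := rfl

lemma step_new_even {m k : ℕ} {s : Finset (ℚ × ℚ)} {p : ℚ × ℚ} (hm : m % 2 = 0)
    (hp : p ∈ step m k s) (hnp : p ∉ s) :
    p = (eQ (m / 2), nthQ (SF s (eQ (m / 2))) k) := by
  classical
  unfold step at hp
  rw [if_pos hm] at hp
  by_cases hg : ∀ q ∈ s, q.1 ≠ eQ (m / 2)
  · rw [if_pos hg] at hp
    rcases Finset.mem_insert.mp hp with h | h
    · exact h
    · exact absurd h hnp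
  · rw [if_neg hg] at hp
    exact absurd hp hnp

lemma step_new_odd {m k : ℕ} {s : Finset (ℚ × ℚ)} {p : ℚ × ℚ} (hm : ¬ (m % 2 = 0))
    (hp : p ∈ step m k s) (hnp : p ∉ s) :
    p = (nthQ (SB s (eQ (m / 2))) k, eQ (m / 2)) := by
  classical
  unfold step at hp
  rw [if_neg hm] at hp
  by_cases hg : ∀ q ∈ s, q.2 ≠ eQ (m / 2)
  · rw [if_pos hg] at hp
    rcases Finset.mem_insert.mp hp with h | h
    · exact h
    · exact absurd h hnp
  · rw [if_neg hg] at hp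
    exact absurd hp hnp

lemma new_unique {ω : KSp} {m : ℕ} {p p' : ℚ × ℚ}
    (h1 : p ∈ build ω (m + 1)) (h2 : p ∉ build ω m)
    (h1' : p' ∈ build ω (m + 1)) (h2' : p' ∉ build ω m) : p = p' := by
  rw [build_succ] at h1 h1'
  by_cases hm : m % 2 = 0
  · rw [step_new_even hm h1 h2, step_new_even hm h1' h2']
  · rw [step_new_odd hm h1 h2, step_new_odd hm h1' h2']

def Agree (c : ℚ → ℚ) (m : ℕ) : Set KSp :=
  {ω | ∃ p ∈ build ω (m + 1), p ∉ build ω m ∧ p.2 = c p.1}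

def agreesAt (c : ℚ → ℚ) (m : ℕ) (s : Finset (ℚ × ℚ)) (k : ℕ) : Prop :=
  if m % 2 = 0 then nthQ (SF s (eQ (m / 2))) k = c (eQ (m / 2))
  else c (nthQ (SB s (eQ (m / 2))) k) = eQ (m / 2)

lemma agreesAt_unique {c : ℚ → ℚ} {m : ℕ} {s : Finset (ℚ × ℚ)} {k k' : ℕ}
    (hs : OK s) (hc : Function.Injective c)
    (h1 : agreesAt c m s k) (h2 : agreesAt c m s k') : k = k' := by
  unfold agreesAt at h1 h2
  by_cases hm : m % 2 = 0
  · rw [if_pos hm] at h1 h2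
    exact nthQ_inj (SF_infinite hs _) (h1.trans h2.symm)
  · rw [if_neg hm] at h1 h2
    exact nthQ_inj (SB_infinite hs _) (hc (h1.trans h2.symm))

open scoped Classical in
noncomputable def tau (c : ℚ → ℚ) (m : ℕ) (s : Finset (ℚ × ℚ)) : ℕ :=
  if h : ∃ k, k < 2 ^ m ∧ agreesAt c m s k then h.choose else 0

lemma tau_lt (c : ℚ → ℚ) (m : ℕ) (s : Finset (ℚ × ℚ)) : tau c m s < 2 ^ m := by
  unfold tau
  split_ifs with h
  · exact h.choose_spec.1
  · exact Nat.pow_pos (by norm_num)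

lemma jj_eq_tau_of_agree {c : ℚ → ℚ} {m : ℕ} {ω : KSp} (hc : Function.Injective c)
    (hω : ω ∈ Agree c m) : jj m ω = tau c m (build ω m) := by
  classical
  obtain ⟨p, hp1, hp2, hp3⟩ := hω
  rw [build_succ] at hp1
  have hag : agreesAt c m (build ω m) (jj m ω) := by
    unfold agreesAt
    by_cases hm : m % 2 = 0
    · rw [if_pos hm]
      have := step_new_even hm hp1 hp2
      rw [this] at hp3
      exact hp3
    · rw [if_neg hm]
      have := step_new_odd hm hp1 hp2
      rw [this] at hp3
      exact hp3.symm
  have hex : ∃ k, k < 2 ^ m ∧ agreesAt c m (build ω m) k := ⟨jj m ω, jj_lt m ω, hag⟩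
  rw [tau, dif_pos hex]
  exact agreesAt_unique (OK_build ω m) hc hag hex.choose_spec.2

/-! ### The translation trick -/

noncomputable def chi (m t : ℕ) : KSp := fun x =>
  if (Nat.pairEquiv.symm x).1 = m ∧ (t.testBit (Nat.pairEquiv.symm x).2) = true then 1 else 0

lemma chi_bpos_self (m t i : ℕ) : chi m t (bpos m i) = if t.testBit i then 1 else 0 := by
  unfold chi bpos
  rw [Equiv.symm_apply_apply]
  by_cases h : t.testBit i
  · rw [if_pos ⟨rfl, h⟩, if_pos h]
  · rw [if_neg (by simp [h]), if_neg h]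

lemma chi_bpos_ne {m m' : ℕ} (h : m' ≠ m) (t i : ℕ) : chi m t (bpos m' i) = 0 := by
  unfold chi bpos
  rw [Equiv.symm_apply_apply]
  exact if_neg (by simp [h])

lemma build_add_chi (ω : KSp) (m t : ℕ) : build (ω + chi m t) m = build ω m := by
  apply build_local
  intro x hx
  obtain ⟨m', hm', i, _, rfl⟩ := mem_TT.mp hx
  rw [Pi.add_apply, chi_bpos_ne (by omega), add_zero]

lemma zmod2_add_decide : ∀ a b : ZMod 2,
    decide (a + b = 1) = xor (decide (a = 1)) (decide (b = 1)) := by decide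

lemma jj_add_chi {m t : ℕ} (ht : t < 2 ^ m) (ω : KSp) :
    jj m (ω + chi m t) = jj m ω ^^^ t := by
  unfold jj
  have hfun : (fun i => decide ((ω + chi m t) (bpos m i) = 1))
      = fun i => xor (decide (ω (bpos m i) = 1)) (t.testBit i) := by
    funext i
    rw [Pi.add_apply, zmod2_add_decide, chi_bpos_self]
    congr 1
    by_cases h : t.testBit i
    · rw [if_pos h]; simp [h]
    · rw [if_neg h]; simp [h]
  rw [hfun, ofBits_xor, ofBits_testBit ht]

/-! ### Measure computation -/

def Dset (m : ℕ) (g : Finset (ℚ × ℚ) → ℕ) : Set KSp := {ω | jj m ω = g (build ω m)}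

lemma isOpen_D (m : ℕ) (g : Finset (ℚ × ℚ) → ℕ) : IsOpen (Dset m g) := by
  have : Dset m g = ⋃ (s₀ : Finset (ℚ × ℚ)),
      ({ω : KSp | build ω m = s₀} ∩ {ω : KSp | jj m ω = g s₀}) := by
    ext ω
    simp only [Dset, Set.mem_setOf_eq, Set.mem_iUnion, Set.mem_inter_iff]
    constructor
    · intro hh; exact ⟨build ω m, rfl, hh⟩
    · rintro ⟨s₀, rfl, hh⟩; exact hh
  rw [this]
  apply isOpen_iUnion
  intro s₀
  apply IsOpen.inter (isOpen_build_fiber m s₀)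
  apply isOpen_local (jj m) ((Finset.range m).image (bpos m)) _ (g s₀)
  intro ω ω' hω
  apply jj_local
  intro i hi
  exact hω _ (Finset.mem_image_of_mem _ (Finset.mem_range.mpr hi))

lemma measurableSet_D (m : ℕ) (g : Finset (ℚ × ℚ) → ℕ) : MeasurableSet (Dset m g) :=
  (isOpen_D m g).measurableSet

lemma measure_D {m : ℕ} {g : Finset (ℚ × ℚ) → ℕ} (hg : ∀ s, g s < 2 ^ m) :
    muK (Dset m g) = ((2 : ℝ≥0∞) ^ m)⁻¹ := by
  classical
  set A : ℕ → Set KSp := fun t => Dset m (fun s => g s ^^^ t) with hA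
  have hA0 : A 0 = Dset m g := by
    simp only [hA, Nat.xor_zero]
  have htrans : ∀ t < 2 ^ m, A t = (fun ω => ω + chi m t) ⁻¹' (A 0) := by
    intro t ht
    ext ω
    simp only [hA, Dset, Set.mem_setOf_eq, Set.mem_preimage, Nat.xor_zero]
    rw [build_add_chi, jj_add_chi ht]
    exact xor_eq_iff.symm
  have hinv : ∀ t < 2 ^ m, muK (A t) = muK (A 0) := by
    intro t ht
    rw [htrans t ht]
    have : (fun ω : KSp => ω + chi m t) = (fun ω : KSp => chi m t + ω) := by
      funext ω; exact add_comm _ _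
    rw [this]
    exact measure_preimage_add muK (chi m t) (A 0)
  have hcover : Set.univ = ⋃ t ∈ Finset.range (2 ^ m), A t := by
    ext ω
    simp only [Set.mem_univ, true_iff, Set.mem_iUnion, Finset.mem_range]
    refine ⟨jj m ω ^^^ g (build ω m), Nat.xor_lt_two_pow (jj_lt m ω) (hg _), ?_⟩
    simp only [hA, Dset, Set.mem_setOf_eq]
    rw [Nat.xor_comm (jj m ω), xor_cancel_left]
  have hdisj : (↑(Finset.range (2 ^ m)) : Set ℕ).PairwiseDisjoint A := by
    intro t _ t' _ hne
    simp only [Function.onFun, Set.disjoint_left]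
    intro ω h1 h2
    simp only [hA, Dset, Set.mem_setOf_eq] at h1 h2
    apply hne
    have hgt : g (build ω m) ^^^ t = g (build ω m) ^^^ t' := h1.symm.trans h2
    have h3 : g (build ω m) ^^^ (g (build ω m) ^^^ t)
        = g (build ω m) ^^^ (g (build ω m) ^^^ t') := by rw [hgt]
    rwa [xor_cancel_left, xor_cancel_left] at h3
  have hsum : muK Set.univ = ∑ t ∈ Finset.range (2 ^ m), muK (A t) := by
    rw [hcover]
    exact measure_biUnion_finset hdisj (fun t _ => measurableSet_D m _)
  have h1 : (1 : ℝ≥0∞) = (2 ^ m : ℕ) * muK (A 0) := by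
    rw [← measure_univ (μ := muK), hsum]
    rw [Finset.sum_congr rfl (fun t htm => hinv t (Finset.mem_range.mp htm))]
    rw [Finset.sum_const, Finset.card_range, nsmul_eq_mul]
  have hc2 : ((2 ^ m : ℕ) : ℝ≥0∞) = (2 : ℝ≥0∞) ^ m := by push_cast; ring
  rw [hc2] at h1
  have hne0 : ((2 : ℝ≥0∞) ^ m) ≠ 0 := pow_ne_zero m (by norm_num)
  have hnetop : ((2 : ℝ≥0∞) ^ m) ≠ ⊤ := ENNReal.pow_ne_top (by norm_num)
  rw [← hA0]
  calc muK (A 0) = ((2 : ℝ≥0∞) ^ m)⁻¹ * ((2 : ℝ≥0∞) ^ m * muK (A 0)) := by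
        rw [← mul_assoc, ENNReal.inv_mul_cancel hne0 hnetop, one_mul]
    _ = ((2 : ℝ≥0∞) ^ m)⁻¹ := by rw [← h1, mul_one]

lemma measure_Agree_le {c : ℚ → ℚ} (hc : Function.Injective c) (m : ℕ) :
    muK (Agree c m) ≤ ((2 : ℝ≥0∞) ^ m)⁻¹ := by
  have hsub : Agree c m ⊆ Dset m (tau c m) := by
    intro ω hω
    exact jj_eq_tau_of_agree hc hω
  exact (measure_mono hsub).trans_eq (measure_D (fun s => tau_lt c m s))

/-! ### Infinitely many agreements force infinitely many agreeing stages -/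

lemma infinite_stages {c : ℚ → ℚ} {ω : KSp}
    (hinf : {y : ℚ | FF ω y = c y}.Infinite) : {m : ℕ | ω ∈ Agree c m}.Infinite := by
  classical
  set N : ℚ → ℕ := fun y =>
    if hy : ∃ m, (y, c y) ∈ build ω m then Nat.find hy else 0 with hN
  have key : ∀ y ∈ {y : ℚ | FF ω y = c y},
      (y, c y) ∈ build ω (N y) ∧ N y ≠ 0 ∧ (y, c y) ∉ build ω (N y - 1) := by
    intro y hy
    have hy' : FF ω y = c y := hy
    have hex : ∃ m, (y, c y) ∈ build ω m := ⟨_, hy' ▸ FF_mem ω y⟩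
    have hmem : (y, c y) ∈ build ω (N y) := by
      rw [hN]; simp only [dif_pos hex]; exact Nat.find_spec hex
    have hne : N y ≠ 0 := by
      intro h0
      rw [h0] at hmem
      simp [build] at hmem
    refine ⟨hmem, hne, ?_⟩
    have : N y - 1 < N y := by omega
    rw [hN] at this ⊢
    simp only [dif_pos hex] at this ⊢
    exact Nat.find_min hex this
  apply Set.infinite_of_injOn_mapsTo (f := fun y => N y - 1) ?_ ?_ hinf
  · intro y hy y' hy' heq
    obtain ⟨k1, k2, k3⟩ := key y hy
    obtain ⟨k1', k2', k3'⟩ := key y' hy'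
    simp only at heq
    have hNN : N y = N y' := by omega
    have hp1 : N y - 1 + 1 = N y := by omega
    have e1 : (y, c y) ∈ build ω ((N y - 1) + 1) := by rw [hp1]; exact k1
    have e2 : (y', c y') ∈ build ω ((N y - 1) + 1) := by rw [hp1, hNN]; exact k1'
    have e3 : (y', c y') ∉ build ω (N y - 1) := by rw [heq]; exact k3'
    have := new_unique e1 k3 e2 e3
    exact ((Prod.mk.injEq _ _ _ _).mp this).1
  · intro y hy
    obtain ⟨k1, k2, k3⟩ := key y hy
    show ω ∈ Agree c (N y - 1)
    refine ⟨(y, c y), ?_, k3, rfl⟩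
    have hp1 : N y - 1 + 1 = N y := by omega
    rw [hp1]
    exact k1

end Aux11

theorem stmt_11 :
    HaarNull ({f : ℚ ≃o ℚ |
      {a : ℚ | (orbitQ f a).Finite}.Finite ∧
      {O : Set ℚ | (∃ a : ℚ, O = orbitQ f a) ∧ O.Infinite}.Infinite}ᶜ) := by
  classical
  refine ⟨Aux11.Wset (fun y => y), ?_, Aux11.measurableSet_W _,
    Aux11.muK.map Aux11.Phi, ?_, ?_⟩
  · -- the complement of the good set consists of maps with infinitely many fixed points
    intro f hf
    simp only [Set.mem_compl_iff, Set.mem_setOf_eq] at hf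
    show {y : ℚ | f y = y}.Infinite
    by_contra hW
    exact hf (Aux11.good_of_fix_finite (Set.not_infinite.mp hW))
  · exact Measure.isProbabilityMeasure_map Aux11.measurable_Phi.aemeasurable
  · intro g h
    rw [Aux11.image_W g h,
      Measure.map_apply Aux11.measurable_Phi (Aux11.measurableSet_W _)]
    set c : ℚ → ℚ := fun y => g (h y) with hcdef
    have hcinj : Function.Injective c := by
      intro a b hab
      exact h.injective (g.injective hab)
    have hsum : ∑' m : ℕ, Aux11.muK (Aux11.Agree c m) ≠ ⊤ := by
      have hle : ∑' m : ℕ, Aux11.muK (Aux11.Agree c m)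
          ≤ ∑' m : ℕ, ((2 : ℝ≥0∞) ^ m)⁻¹ :=
        ENNReal.tsum_le_tsum (fun m => Aux11.measure_Agree_le hcinj m)
      have hgeo : ∑' m : ℕ, ((2 : ℝ≥0∞) ^ m)⁻¹ = 2 := by
        have : ∀ m : ℕ, ((2 : ℝ≥0∞) ^ m)⁻¹ = (2⁻¹ : ℝ≥0∞) ^ m := fun m => ENNReal.inv_pow
        rw [tsum_congr this, ENNReal.tsum_geometric, ENNReal.one_sub_inv_two, inv_inv]
      rw [hgeo] at hle
      exact ne_top_of_le_ne_top ENNReal.ofNat_ne_top hle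
    have hae := MeasureTheory.ae_finite_setOf_mem (μ := Aux11.muK)
      (s := fun m => Aux11.Agree c m) hsum
    rw [MeasureTheory.ae_iff] at hae
    apply measure_mono_null ?_ hae
    intro ω hω
    simp only [Set.mem_preimage] at hω
    have hinf : {y : ℚ | Aux11.FF ω y = c y}.Infinite := by
      have hset : {y : ℚ | Aux11.Phi ω y = c y} = {y : ℚ | Aux11.FF ω y = c y} := by
        simp only [Aux11.coe_Phi]
      have hω' : {y : ℚ | Aux11.Phi ω y = c y}.Infinite := hω
      rwa [hset] at hω'
    exact Aux11.infinite_stages hinf
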